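/- Let n ≥ 1 and let A, B be centrally symmetric convex bodies in ℝⁿ. If for every convex body K in ℝⁿ one has vol(A + K) ≤ vol(B + K), then A ⊆ B. -/

import Mathlib

open MeasureTheory Pointwise RealInnerProductSpace Filter

lemma vol_box {n : ℕ} (w : Fin n → ℝ) :
    (volume : Measure (EuclideanSpace ℝ (Fin n)))
      (WithLp.ofLp ⁻¹' (Set.univ.pi fun i : Fin n => Set.Icc (-(w i)) (w i))) =
      ∏ i, ENNReal.ofReal (2 * w i) := by
  have h1 : ((WithLp.ofLp ⁻¹' (Set.univ.pi fun i : Fin n => Set.Icc (-(w i)) (w i))) : Set (EuclideanSpace ℝ (Fin n)))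
      = (MeasurableEquiv.toLp 2 (Fin n → ℝ)).symm ⁻¹'
        ((Set.univ.pi fun i : Fin n => Set.Icc (-(w i)) (w i)) : Set (Fin n → ℝ)) := rfl
  rw [h1]
  refine ((EuclideanSpace.volume_preserving_symm_measurableEquiv_toLp (Fin n)).measure_preimage_equiv
    _).trans ?_
  rw [volume_pi_pi]
  congr 1
  ext i
  rw [Real.volume_Icc]
  ring_nf

lemma box_measurable {n : ℕ} (w : Fin n → ℝ) :
    MeasurableSet ((WithLp.ofLp ⁻¹' (Set.univ.pi fun i : Fin n => Set.Icc (-(w i)) (w i))) :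
      Set (EuclideanSpace ℝ (Fin n))) :=
  (MeasurableEquiv.toLp 2 (Fin n → ℝ)).symm.measurable
    (MeasurableSet.univ_pi fun _ => measurableSet_Icc)

lemma prod_ite_fin {n : ℕ} [NeZero n] (X Y : ENNReal) :
    (∏ i : Fin n, if i = 0 then X else Y) = X * Y ^ (n - 1) := by
  rw [← Finset.mul_prod_erase Finset.univ _ (Finset.mem_univ (0 : Fin n))]
  rw [if_pos rfl]
  congr 1
  rw [Finset.prod_congr rfl (fun i hi => if_neg (Finset.ne_of_mem_erase hi)),
    Finset.prod_const, Finset.card_erase_of_mem (Finset.mem_univ _), Finset.card_univ,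
    Fintype.card_fin]

set_option maxHeartbeats 1000000 in
/-- **Theorem (symmetric case of Minkowski-sum comparison).**
If `A`, `B` are centrally symmetric convex bodies in `ℝⁿ` and
`vol(A + K) ≤ vol(B + K)` for every convex body `K`, then `A ⊆ B`. -/
theorem sum_comparison_symmetric (n : ℕ) (hn : 1 ≤ n)
    (A B : Set (EuclideanSpace ℝ (Fin n)))
    (hA₁ : IsCompact A) (hA₂ : Convex ℝ A) (hA₃ : (interior A).Nonempty)
    (hB₁ : IsCompact B) (hB₂ : Convex ℝ B) (hB₃ : (interior B).Nonempty)
    (hAsymm : A = -A) (hBsymm : B = -B)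
    (h : ∀ K : Set (EuclideanSpace ℝ (Fin n)),
        IsCompact K → Convex ℝ K → (interior K).Nonempty →
        volume (A + K) ≤ volume (B + K)) :
    A ⊆ B := by
  haveI : NeZero n := ⟨by omega⟩
  by_contra hAB
  rw [Set.not_subset] at hAB
  obtain ⟨a, haA, haB⟩ := hAB
  -- 0 ∈ B
  obtain ⟨b₀, hb₀i⟩ := hB₃
  have hb₀B : b₀ ∈ B := interior_subset hb₀i
  have hnegB : ∀ x ∈ B, -x ∈ B := by
    intro x hx
    rw [hBsymm]
    exact Set.mem_neg.mpr (by simpa using hx)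
  have h0B : (0 : EuclideanSpace ℝ (Fin n)) ∈ B := by
    have := hB₂ hb₀B (hnegB b₀ hb₀B) (by norm_num : (0:ℝ) ≤ 1/2)
      (by norm_num : (0:ℝ) ≤ 1/2) (by norm_num)
    simpa using this
  -- separation
  obtain ⟨f, u, hfB, hfa⟩ := geometric_hahn_banach_closed_point hB₂ hB₁.isClosed haB
  have hu : 0 < u := by simpa using hfB 0 h0B
  set v : EuclideanSpace ℝ (Fin n) :=
    (InnerProductSpace.toDual ℝ (EuclideanSpace ℝ (Fin n))).symm f with hv_def
  have hfv : ∀ x : EuclideanSpace ℝ (Fin n), ⟪v, x⟫ = f x := fun x =>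
    InnerProductSpace.toDual_symm_apply
  have hvne : v ≠ 0 := by
    intro h0
    have : f a = 0 := by rw [← hfv a, h0, inner_zero_left]
    linarith
  have hvnorm : (0:ℝ) < ‖v‖ := norm_pos_iff.mpr hvne
  set u₀ : EuclideanSpace ℝ (Fin n) := ‖v‖⁻¹ • v with hu₀_def
  have hu₀norm : ‖u₀‖ = 1 := by
    rw [hu₀_def, norm_smul, norm_inv, norm_norm, inv_mul_cancel₀ hvnorm.ne']
  have hinner : ∀ x : EuclideanSpace ℝ (Fin n), ⟪u₀, x⟫ = ‖v‖⁻¹ * f x := by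
    intro x; rw [hu₀_def, real_inner_smul_left, hfv]
  set c : ℝ := u / ‖v‖ with hc_def
  set t : ℝ := ⟪u₀, a⟫ with ht_def
  have hc : 0 < c := div_pos hu hvnorm
  have hct : c < t := by
    rw [ht_def, hinner, hc_def, div_eq_inv_mul]
    exact mul_lt_mul_of_pos_left hfa (inv_pos.mpr hvnorm)
  have ht : 0 < t := hc.trans hct
  have hBc : ∀ p ∈ B, |⟪u₀, p⟫| ≤ c := by
    intro p hp
    rw [abs_le]
    have h1 : ⟪u₀, p⟫ < c := by
      rw [hinner, hc_def, div_eq_inv_mul]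
      exact mul_lt_mul_of_pos_left (hfB p hp) (inv_pos.mpr hvnorm)
    have h2 : ⟪u₀, -p⟫ < c := by
      rw [hinner, hc_def, div_eq_inv_mul]
      exact mul_lt_mul_of_pos_left (hfB _ (hnegB p hp)) (inv_pos.mpr hvnorm)
    rw [inner_neg_right] at h2
    constructor <;> linarith
  -- adapted orthonormal basis
  have hcard : Module.finrank ℝ (EuclideanSpace ℝ (Fin n)) = Fintype.card (Fin n) := by simp
  have horth : Orthonormal ℝ (({0} : Set (Fin n)).restrict fun _ => u₀) := by
    constructor
    · intro i; exact hu₀norm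
    · intro i j hij; exact absurd (Subsingleton.elim i j) hij
  obtain ⟨bE, hbE⟩ := Orthonormal.exists_orthonormalBasis_extension_of_card_eq hcard horth
  have hbE0 : bE 0 = u₀ := hbE 0 rfl
  set Φ := bE.repr with hΦ_def
  have hcoord : ∀ (x : EuclideanSpace ℝ (Fin n)) i, Φ x i = ⟪bE i, x⟫ := fun x i =>
    bE.repr_apply_apply x i
  have hΦa0 : Φ a 0 = t := by rw [hcoord, hbE0]
  have hΦB0 : ∀ p ∈ B, |Φ p 0| ≤ c := by
    intro p hp
    rw [hcoord, hbE0]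
    exact hBc p hp
  have hbEnorm : ∀ i, ‖bE i‖ = 1 := bE.orthonormal.1
  clear_value t c
  clear hBc hinner ht_def hc_def hu₀norm hbE hbE0 horth hcard hfv hvne hv_def hfa hfB hu
  clear hu₀_def v u₀ f u hvnorm
  obtain ⟨M, hM⟩ := hB₁.isBounded.subset_closedBall 0
  have hM0 : 0 ≤ M := by simpa using hM h0B
  have hBnorm : ∀ p ∈ B, ‖p‖ ≤ M := by
    intro p hp; simpa using hM hp
  set r : ℝ := ‖a‖ with hr_def
  have hr0 : 0 ≤ r := norm_nonneg a
  -- the main inequality for each large R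
  have main : ∀ R : ℝ, r + 1 ≤ R ∧ 1 ≤ R →
      t + 1 ≤ (c + 1) * ((R + M) / (R - r)) ^ (n - 1) := by
    rintro R ⟨hR1, hR2⟩
    have hRr : 1 ≤ R - r := by linarith
    have hRpos : 0 < R := by linarith
    set wK : Fin n → ℝ := fun i => if i = 0 then (1:ℝ) else R with hwK_def
    set wA : Fin n → ℝ := fun i => if i = 0 then t + 1 else R - r with hwA_def
    set wB : Fin n → ℝ := fun i => if i = 0 then c + 1 else R + M with hwB_def
    set K : Set (EuclideanSpace ℝ (Fin n)) :=
      Φ ⁻¹' (WithLp.ofLp ⁻¹' Set.univ.pi fun i => Set.Icc (-(wK i)) (wK i)) with hK_def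
    -- K is a convex body
    have hKcomp : IsCompact K := by
      have himg : K = Φ.symm '' (WithLp.ofLp ⁻¹' Set.univ.pi fun i => Set.Icc (-(wK i)) (wK i)) := by
        ext x
        constructor
        · intro hx; exact ⟨Φ x, hx, Φ.symm_apply_apply x⟩
        · rintro ⟨y, hy, rfl⟩
          rw [hK_def, Set.mem_preimage, Φ.apply_symm_apply]
          exact hy
      rw [himg]
      exact ((PiLp.homeomorph 2 (fun _ : Fin n => ℝ)).isCompact_preimage.2
        (isCompact_univ_pi fun i => isCompact_Icc)).image Φ.symm.continuous
    have hKconv : Convex ℝ K := by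
      have : Convex ℝ ((WithLp.ofLp ⁻¹' Set.univ.pi fun i => Set.Icc (-(wK i)) (wK i)) :
          Set (EuclideanSpace ℝ (Fin n))) :=
        (convex_pi fun i _ => convex_Icc _ _).linear_preimage
          (WithLp.linearEquiv 2 ℝ (Fin n → ℝ)).toLinearMap
      exact this.linear_preimage (Φ.toLinearEquiv.toLinearMap)
    have hKint : (interior K).Nonempty := by
      refine ⟨0, ?_⟩
      have hU : IsOpen (Φ ⁻¹' (WithLp.ofLp ⁻¹' Set.univ.pi fun i => Set.Ioo (-(wK i)) (wK i))) :=
        ((isOpen_set_pi Set.finite_univ fun i _ => isOpen_Ioo).preimage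
          (PiLp.continuous_ofLp 2 _)).preimage Φ.continuous
      have h0U : (0 : EuclideanSpace ℝ (Fin n)) ∈
          Φ ⁻¹' (WithLp.ofLp ⁻¹' Set.univ.pi fun i => Set.Ioo (-(wK i)) (wK i)) := by
        rw [Set.mem_preimage, map_zero, Set.mem_preimage, Set.mem_univ_pi]
        intro i
        have hwKi : 0 < wK i := by
          by_cases hi : i = 0 <;> simp [hwK_def, hi] <;> linarith
        have h0i : (0 : EuclideanSpace ℝ (Fin n)) i = 0 := rfl
        rw [h0i, Set.mem_Ioo]
        constructor <;> linarith
      exact interior_maximal (Set.preimage_mono <| Set.preimage_mono fun y hy => by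
        rw [Set.mem_univ_pi] at hy ⊢
        exact fun i => Set.Ioo_subset_Icc_self (hy i)) hU h0U
    -- lower inclusion
    have hsubA : Φ ⁻¹' (WithLp.ofLp ⁻¹' Set.univ.pi fun i => Set.Icc (-(wA i)) (wA i)) ⊆ A + K := by
      intro x hx
      rw [Set.mem_preimage, Set.mem_preimage, Set.mem_univ_pi] at hx
      set s : ℝ := max (-1) (min 1 (Φ x 0 / t)) with hs_def
      have hs1 : -1 ≤ s := le_max_left _ _
      have hs2 : s ≤ 1 := max_le (by norm_num) (min_le_left _ _)
      have hy0 : Φ x 0 ∈ Set.Icc (-(t+1)) (t+1) := by simpa [hwA_def] using hx 0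
      obtain ⟨hy0l, hy0r⟩ := hy0
      have key : |Φ x 0 - s * t| ≤ 1 := by
        rcases le_total (Φ x 0 / t) (-1) with h1 | h1
        · have hsv : s = -1 := by
            rw [hs_def, min_eq_right (h1.trans (by norm_num)), max_eq_left h1]
          have hle : Φ x 0 ≤ -t := by
            have := (div_le_iff₀ ht).mp h1
            linarith
          rw [hsv, abs_le]; constructor <;> nlinarith
        rcases le_total 1 (Φ x 0 / t) with h2 | h2
        · have hsv : s = 1 := by
            rw [hs_def, min_eq_left h2, max_eq_right (by norm_num : (-1:ℝ) ≤ 1)]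
          have hle : t ≤ Φ x 0 := by
            have := (le_div_iff₀ ht).mp h2
            linarith
          rw [hsv, abs_le]; constructor <;> nlinarith
        · have hsv : s = Φ x 0 / t := by
            rw [hs_def, min_eq_right h2, max_eq_right h1]
          rw [hsv, div_mul_cancel₀ _ ht.ne', sub_self, abs_zero]; norm_num
      have hsabs : |s| ≤ 1 := abs_le.mpr ⟨hs1, hs2⟩
      have hka : x - s • a ∈ K := by
        rw [hK_def, Set.mem_preimage, Set.mem_preimage, Set.mem_univ_pi]
        intro i
        have hΦk : Φ (x - s • a) i = Φ x i - s * Φ a i := by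
          have hsm : Φ (x - s • a) = Φ x - s • Φ a := by
            rw [map_sub, Φ.map_smul]
          rw [hsm]; rfl
        rw [hΦk, Set.mem_Icc]
        by_cases hi : i = 0
        · subst hi
          rw [hΦa0]
          obtain ⟨k1, k2⟩ := abs_le.mp key
          simp only [hwK_def, if_pos rfl]
          constructor <;> linarith
        · have hyi : |Φ x i| ≤ R - r := by
            have := hx i
            simp only [hwA_def, if_neg hi] at this
            exact abs_le.mpr this
          have hai : |Φ a i| ≤ r := by
            rw [hcoord]
            calc |⟪bE i, a⟫| ≤ ‖bE i‖ * ‖a‖ := abs_real_inner_le_norm _ _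
              _ = r := by rw [hbEnorm i, one_mul, hr_def]
          have hsai : |s * Φ a i| ≤ r := by
            rw [abs_mul]
            calc |s| * |Φ a i| ≤ 1 * r := mul_le_mul hsabs hai (abs_nonneg _) one_pos.le
              _ = r := one_mul r
          obtain ⟨p1, p2⟩ := abs_le.mp hyi
          obtain ⟨q1, q2⟩ := abs_le.mp hsai
          simp only [hwK_def, if_neg hi]
          constructor <;> linarith
      have hsa : s • a ∈ A := by
        have hna : -a ∈ A := by
          rw [hAsymm]; exact Set.mem_neg.mpr (by simpa using haA)
        have hc1 : (0:ℝ) ≤ (1 + s)/2 := by linarith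
        have hc2 : (0:ℝ) ≤ (1 - s)/2 := by linarith
        have hsum : (1+s)/2 + (1-s)/2 = 1 := by ring
        have hmem := hA₂ haA hna hc1 hc2 hsum
        have heq : ((1+s)/2) • a + ((1-s)/2) • (-a) = s • a := by module
        rwa [heq] at hmem
      have hxeq : s • a + (x - s • a) = x := by abel
      rw [← hxeq]
      exact Set.add_mem_add hsa hka
    -- upper inclusion
    have hsubB : B + K ⊆ Φ ⁻¹' (WithLp.ofLp ⁻¹' Set.univ.pi fun i => Set.Icc (-(wB i)) (wB i)) := by
      intro x hx
      rw [Set.mem_add] at hx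
      obtain ⟨p, hp, z, hz, rfl⟩ := hx
      rw [hK_def, Set.mem_preimage, Set.mem_preimage, Set.mem_univ_pi] at hz
      rw [Set.mem_preimage, Set.mem_preimage, Set.mem_univ_pi]
      intro i
      have hΦpz : Φ (p + z) i = Φ p i + Φ z i := by rw [map_add]; rfl
      rw [hΦpz, Set.mem_Icc]
      by_cases hi : i = 0
      · subst hi
        have hp0 : |Φ p 0| ≤ c := hΦB0 p hp
        have hz0 : |Φ z 0| ≤ 1 := by
          have := hz 0
          simp only [hwK_def, if_pos rfl] at this
          exact abs_le.mpr this
        obtain ⟨p1, p2⟩ := abs_le.mp hp0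
        obtain ⟨q1, q2⟩ := abs_le.mp hz0
        simp only [hwB_def, if_pos rfl]
        constructor <;> linarith
      · have hpi : |Φ p i| ≤ M := by
          rw [hcoord]
          calc |⟪bE i, p⟫| ≤ ‖bE i‖ * ‖p‖ := abs_real_inner_le_norm _ _
            _ = ‖p‖ := by rw [hbEnorm i, one_mul]
            _ ≤ M := hBnorm p hp
        have hzi : |Φ z i| ≤ R := by
          have := hz i
          simp only [hwK_def, if_neg hi] at this
          exact abs_le.mpr this
        obtain ⟨p1, p2⟩ := abs_le.mp hpi
        obtain ⟨q1, q2⟩ := abs_le.mp hzi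
        simp only [hwB_def, if_neg hi]
        constructor <;> linarith
    -- volumes
    have hvolA : volume (Φ ⁻¹' (WithLp.ofLp ⁻¹' Set.univ.pi fun i => Set.Icc (-(wA i)) (wA i))) =
        ENNReal.ofReal (2*(t+1)) * ENNReal.ofReal (2*(R-r)) ^ (n-1) := by
      rw [bE.measurePreserving_repr.measure_preimage (box_measurable wA).nullMeasurableSet,
        vol_box]
      have : ∀ i : Fin n, ENNReal.ofReal (2 * wA i) =
          if i = 0 then ENNReal.ofReal (2*(t+1)) else ENNReal.ofReal (2*(R-r)) := by
        intro i; by_cases hi : i = 0 <;> simp [hwA_def, hi]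
      rw [Finset.prod_congr rfl fun i _ => this i, prod_ite_fin]
    have hvolB : volume (Φ ⁻¹' (WithLp.ofLp ⁻¹' Set.univ.pi fun i => Set.Icc (-(wB i)) (wB i))) =
        ENNReal.ofReal (2*(c+1)) * ENNReal.ofReal (2*(R+M)) ^ (n-1) := by
      rw [bE.measurePreserving_repr.measure_preimage (box_measurable wB).nullMeasurableSet,
        vol_box]
      have : ∀ i : Fin n, ENNReal.ofReal (2 * wB i) =
          if i = 0 then ENNReal.ofReal (2*(c+1)) else ENNReal.ofReal (2*(R+M)) := by
        intro i; by_cases hi : i = 0 <;> simp [hwB_def, hi]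
      rw [Finset.prod_congr rfl fun i _ => this i, prod_ite_fin]
    -- chain
    have hchain : ENNReal.ofReal (2*(t+1)) * ENNReal.ofReal (2*(R-r)) ^ (n-1) ≤
        ENNReal.ofReal (2*(c+1)) * ENNReal.ofReal (2*(R+M)) ^ (n-1) := by
      calc ENNReal.ofReal (2*(t+1)) * ENNReal.ofReal (2*(R-r)) ^ (n-1)
          = volume (Φ ⁻¹' (WithLp.ofLp ⁻¹' Set.univ.pi fun i => Set.Icc (-(wA i)) (wA i))) := hvolA.symm
        _ ≤ volume (A + K) := measure_mono hsubA
        _ ≤ volume (B + K) := h K hKcomp hKconv hKint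
        _ ≤ volume (Φ ⁻¹' (WithLp.ofLp ⁻¹' Set.univ.pi fun i => Set.Icc (-(wB i)) (wB i))) :=
            measure_mono hsubB
        _ = ENNReal.ofReal (2*(c+1)) * ENNReal.ofReal (2*(R+M)) ^ (n-1) := hvolB
    -- to real numbers
    have h2Rr : (0:ℝ) ≤ 2*(R-r) := by linarith
    have h2RM : (0:ℝ) ≤ 2*(R+M) := by linarith
    have h2t : (0:ℝ) ≤ 2*(t+1) := by linarith
    have h2c : (0:ℝ) ≤ 2*(c+1) := by linarith
    rw [← ENNReal.ofReal_pow h2Rr, ← ENNReal.ofReal_pow h2RM,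
      ← ENNReal.ofReal_mul h2t, ← ENNReal.ofReal_mul h2c] at hchain
    have hreal : 2*(t+1) * (2*(R-r))^(n-1) ≤ 2*(c+1) * (2*(R+M))^(n-1) :=
      (ENNReal.ofReal_le_ofReal_iff
        (mul_nonneg h2c (pow_nonneg h2RM _))).mp hchain
    -- cancel the powers of 2
    have h2pos : (0:ℝ) < 2 * 2^(n-1) := by positivity
    have hcanc : (t+1) * (R-r)^(n-1) ≤ (c+1) * (R+M)^(n-1) := by
      have hh : (2*2^(n-1)) * ((t+1)*(R-r)^(n-1)) ≤ (2*2^(n-1)) * ((c+1)*(R+M)^(n-1)) := by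
        calc (2*2^(n-1)) * ((t+1)*(R-r)^(n-1)) = 2*(t+1) * (2^(n-1)*(R-r)^(n-1)) := by ring
          _ = 2*(t+1) * (2*(R-r))^(n-1) := by rw [mul_pow]
          _ ≤ 2*(c+1) * (2*(R+M))^(n-1) := hreal
          _ = 2*(c+1) * (2^(n-1)*(R+M)^(n-1)) := by rw [mul_pow]
          _ = (2*2^(n-1)) * ((c+1)*(R+M)^(n-1)) := by ring
      exact le_of_mul_le_mul_left hh h2pos
    have hpow : (0:ℝ) < (R - r)^(n-1) := pow_pos (by linarith) _
    rw [div_pow, ← mul_div_assoc, le_div_iff₀ hpow]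
    exact hcanc
  -- take the limit R → ∞
  have htend : Tendsto (fun R : ℝ => (c+1) * ((R + M)/(R - r))^(n-1)) atTop
      (nhds ((c+1) * 1^(n-1))) := by
    refine Tendsto.const_mul _ (Tendsto.pow ?_ _)
    have h₁ : Tendsto (fun R : ℝ => 1 + (M + r)/(R - r)) atTop (nhds (1 + 0)) :=
      tendsto_const_nhds.add (Tendsto.div_atTop tendsto_const_nhds
        (tendsto_atTop_add_const_right _ _ tendsto_id))
    rw [add_zero] at h₁
    refine Tendsto.congr' ?_ h₁
    filter_upwards [eventually_gt_atTop r] with R hR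
    have hne : R - r ≠ 0 := sub_ne_zero.mpr hR.ne'
    field_simp
    ring
  have hle : t + 1 ≤ (c+1) * 1^(n-1) := by
    refine ge_of_tendsto htend ?_
    filter_upwards [eventually_ge_atTop (max (r+1) 1)] with R hR
    exact main R ⟨le_trans (le_max_left _ _) hR, le_trans (le_max_right _ _) hR⟩
  rw [one_pow, mul_one] at hle
  linarith
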